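/- Let R be a ring, let N be an R-module, and let 0 → A → B → C → 0 be a short exact sequence of R-modules. If N is A-subprojective and N is C-subprojective, then N is B-subprojective. (That is, the subprojectivity domain of any module is closed under extensions.) -/

import Mathlib

universe u

/-- `IsSubinjective R B A` means: the `R`-module `B` is `A`-subinjective, i.e. for every
`R`-module `C`, every injective `R`-linear map `i : A → C` and every `R`-linear map
`f : A → B`, there is an `R`-linear map `g : C → B` with `g ∘ i = f`. -/
def IsSubinjective (R : Type u) [Ring R] (B : Type u) [AddCommGroup B] [Module R B]
    (A : Type u) [AddCommGroup A] [Module R A] : Prop :=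
  ∀ (C : Type u) [AddCommGroup C] [Module R C] (i : A →ₗ[R] C),
    Function.Injective i → ∀ f : A →ₗ[R] B, ∃ g : C →ₗ[R] B, g ∘ₗ i = f

/-- `IsSubprojective R B A` means: the `R`-module `B` is `A`-subprojective, i.e. for every
`R`-module `C`, every surjective `R`-linear map `g : C → A` and every `R`-linear map
`f : B → A`, there is an `R`-linear map `h : B → C` with `g ∘ h = f`. -/
def IsSubprojective (R : Type u) [Ring R] (B : Type u) [AddCommGroup B] [Module R B]
    (A : Type u) [AddCommGroup A] [Module R A] : Prop :=
  ∀ (C : Type u) [AddCommGroup C] [Module R C] (g : C →ₗ[R] A),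
    Function.Surjective g → ∀ f : B →ₗ[R] A, ∃ h : B →ₗ[R] C, g ∘ₗ h = f

/-- `M` is subinjective extension-reflecting (si.e.r.): for every short exact sequence
`0 → A → B → C → 0`, if `A` and `C` are `M`-subinjective, then so is `B`. -/
def IsSIER (R : Type u) [Ring R] (M : Type u) [AddCommGroup M] [Module R M] : Prop :=
  ∀ (A B C : Type u) [AddCommGroup A] [Module R A] [AddCommGroup B] [Module R B]
    [AddCommGroup C] [Module R C] (f : A →ₗ[R] B) (g : B →ₗ[R] C),
    Function.Injective f → Function.Surjective g → Function.Exact f g →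
    IsSubinjective R A M → IsSubinjective R C M → IsSubinjective R B M

/-- `M` is subprojective extension-reflecting (sp.e.r.): for every short exact sequence
`0 → A → B → C → 0`, if `A` and `C` are `M`-subprojective, then so is `B`. -/
def IsSPER (R : Type u) [Ring R] (M : Type u) [AddCommGroup M] [Module R M] : Prop :=
  ∀ (A B C : Type u) [AddCommGroup A] [Module R A] [AddCommGroup B] [Module R B]
    [AddCommGroup C] [Module R C] (f : A →ₗ[R] B) (g : B →ₗ[R] C),
    Function.Injective f → Function.Surjective g → Function.Exact f g →
    IsSubprojective R A M → IsSubprojective R C M → IsSubprojective R B M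

/-- The subprojectivity domain of any module is closed under extensions: given a short exact
sequence `0 → A → B → C → 0`, if `N` is `A`-subprojective and `C`-subprojective, then `N` is
`B`-subprojective. -/
theorem subprojectivity_domain_closed_under_extensions (R : Type u) [Ring R]
    (N : Type u) [AddCommGroup N] [Module R N]
    (A B C : Type u) [AddCommGroup A] [Module R A] [AddCommGroup B] [Module R B]
    [AddCommGroup C] [Module R C]
    (f : A →ₗ[R] B) (g : B →ₗ[R] C)
    (hf : Function.Injective f) (hg : Function.Surjective g) (hfg : Function.Exact f g)
    (hA : IsSubprojective R N A) (hC : IsSubprojective R N C) :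
    IsSubprojective R N B := by
  intro D _ _ p hp φ
  -- Step 1: use C-subprojectivity with surjection g ∘ p : D → C and map g ∘ φ : N → C
  obtain ⟨h₁, hh₁⟩ := hC D (g ∘ₗ p) (hg.comp hp) (g ∘ₗ φ)
  -- ψ := φ - p ∘ h₁ lands in ker g = range f
  set ψ : N →ₗ[R] B := φ - p ∘ₗ h₁ with hψ
  have hψ0 : ∀ n, g (ψ n) = 0 := by
    intro n
    have := congrArg (fun k => k n) hh₁
    simp only [LinearMap.comp_apply] at this ⊢
    simp [hψ, this]
  have hψrange : ∀ n, ψ n ∈ LinearMap.range f := fun n => (hfg (ψ n)).mp (hψ0 n)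
  set e : A ≃ₗ[R] LinearMap.range f := LinearEquiv.ofInjective f hf with he
  have hfe : ∀ y : LinearMap.range f, f (e.symm y) = (y : B) := by
    intro y
    have := congrArg (Subtype.val) (e.apply_symm_apply y)
    simpa [he, LinearEquiv.ofInjective_apply] using this
  -- K := ker (g ∘ p)
  set K := LinearMap.ker (g ∘ₗ p) with hK
  have hpK : ∀ x : K, p x ∈ LinearMap.range f := by
    intro x
    exact (hfg (p x)).mp x.2
  set q : K →ₗ[R] A :=
    e.symm.toLinearMap ∘ₗ LinearMap.codRestrict (LinearMap.range f) (p ∘ₗ K.subtype) hpK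
    with hq
  have hfq : ∀ x : K, f (q x) = p x := by
    intro x
    exact hfe ⟨p x, hpK x⟩
  have hqsurj : Function.Surjective q := by
    intro a
    obtain ⟨d, hd⟩ := hp (f a)
    have hdK : d ∈ K := by
      simp [hK, LinearMap.mem_ker, hd, hfg.apply_apply_eq_zero a]
    refine ⟨⟨d, hdK⟩, hf ?_⟩
    rw [hfq ⟨d, hdK⟩]; exact hd
  set ψ' : N →ₗ[R] A :=
    e.symm.toLinearMap ∘ₗ LinearMap.codRestrict (LinearMap.range f) ψ hψrange with hψ'
  have hfψ' : ∀ n, f (ψ' n) = ψ n := by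
    intro n
    exact hfe ⟨ψ n, hψrange n⟩
  obtain ⟨h₂, hh₂⟩ := hA K q hqsurj ψ'
  refine ⟨h₁ + K.subtype ∘ₗ h₂, ?_⟩
  ext n
  have h2n : q (h₂ n) = ψ' n := congrArg (fun k => k n) hh₂
  have : p (h₂ n : D) = ψ n := by
    rw [← hfψ' n, ← h2n, hfq]
  simp only [LinearMap.comp_apply, LinearMap.add_apply, map_add, Submodule.coe_subtype, this]
  simp [hψ]
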